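/- In any ontological model for ℂ² with D injective, for all unit vectors ψ, φ ∈ ℂ²: ρ₁(Λ_ψ ∩ Λ_φ) = tr(P_ψ·P_φ) = |⟨ψ, φ⟩|², where ρ₁ := 2·D⁻¹(½I) and Λ_χ := {λ ∈ Λ : p_{P_χ}(λ) = 1}. -/

import Mathlib

open MeasureTheory
open scoped NNReal ENNReal ComplexOrder

noncomputable section

/-- The rank-one projection `|ψ⟩⟨ψ|` associated with a vector `ψ ∈ ℂⁿ`. -/
def proj {n : ℕ} (ψ : EuclideanSpace ℂ (Fin n)) : Matrix (Fin n) (Fin n) ℂ :=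
  Matrix.of fun i j => ψ i * (starRingEnd ℂ) (ψ j)

/-- An ontological model for `ℂⁿ`: a measurable space `Λ` of ontic states, a convex set `C`
of preparable probability measures on `Λ`, measurable response functions `p A : Λ → [0,1]`
for each effect `A` (`0 ≤ A ≤ 1` in the Loewner order), and a map `D` from `C` onto the set
of density matrices reproducing the quantum statistics. -/
structure OntModel (n : ℕ) (Λ : Type*) [MeasurableSpace Λ] where
  C : Set (Measure Λ)
  prob : ∀ ρ ∈ C, IsProbabilityMeasure ρ
  convexC : ∀ ρa ∈ C, ∀ ρb ∈ C, ∀ s : ℝ≥0, s ≤ 1 → s • ρa + (1 - s) • ρb ∈ C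
  p : Matrix (Fin n) (Fin n) ℂ → Λ → ℝ
  p_meas : ∀ A, Measurable (p A)
  p_nonneg : ∀ A l, 0 ≤ p A l
  p_le_one : ∀ A l, p A l ≤ 1
  D : Measure Λ → Matrix (Fin n) (Fin n) ℂ
  D_psd : ∀ ρ ∈ C, (D ρ).PosSemidef
  D_trace : ∀ ρ ∈ C, (D ρ).trace = 1
  D_surj : ∀ W : Matrix (Fin n) (Fin n) ℂ, W.PosSemidef → W.trace = 1 → ∃ ρ ∈ C, D ρ = W
  agree : ∀ ρ ∈ C, ∀ A : Matrix (Fin n) (Fin n) ℂ, A.PosSemidef → (1 - A).PosSemidef →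
    ((∫ l, p A l ∂ρ : ℝ) : ℂ) = (D ρ * A).trace

/-! ### Matrix helpers -/

lemma trace_proj_mul (ψ φ : EuclideanSpace ℂ (Fin 2)) :
    (proj ψ * proj φ).trace = (starRingEnd ℂ) (inner ℂ ψ φ : ℂ) * (inner ℂ ψ φ : ℂ) := by
  simp [proj, Matrix.trace, Matrix.mul_apply, Matrix.diag, Fin.sum_univ_two,
    PiLp.inner_apply, RCLike.inner_apply, map_add, map_mul]
  ring

lemma trace_proj_mul' (ψ φ : EuclideanSpace ℂ (Fin 2)) :
    (proj ψ * proj φ).trace = ((‖(inner ℂ ψ φ : ℂ)‖ ^ 2 : ℝ) : ℂ) := by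
  rw [trace_proj_mul, Complex.conj_mul']
  norm_num

def perp (ψ : EuclideanSpace ℂ (Fin 2)) : EuclideanSpace ℂ (Fin 2) :=
  WithLp.toLp 2 (fun i : Fin 2 => if i = 0 then -(starRingEnd ℂ) (ψ 1) else (starRingEnd ℂ) (ψ 0))

lemma unit_sum (ψ : EuclideanSpace ℂ (Fin 2)) (hψ : ‖ψ‖ = 1) :
    (starRingEnd ℂ) (ψ 0) * ψ 0 + (starRingEnd ℂ) (ψ 1) * ψ 1 = 1 := by
  have := inner_self_eq_norm_sq_to_K (𝕜 := ℂ) ψ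
  rw [hψ] at this
  simp only [PiLp.inner_apply, RCLike.inner_apply, Fin.sum_univ_two, Complex.ofReal_one,
    RCLike.ofReal_one, one_pow] at this
  linear_combination this

lemma posSemidef_proj (ψ : EuclideanSpace ℂ (Fin 2)) : (proj ψ).PosSemidef := by
  rw [Matrix.posSemidef_iff_dotProduct_mulVec]
  constructor
  · ext i j
    simp [proj, Matrix.conjTranspose_apply, mul_comm]
  · intro x
    have h : dotProduct (star x) (Matrix.mulVec (proj ψ) x) =
        star ((starRingEnd ℂ) (ψ 0) * x 0 + (starRingEnd ℂ) (ψ 1) * x 1) *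
          ((starRingEnd ℂ) (ψ 0) * x 0 + (starRingEnd ℂ) (ψ 1) * x 1) := by
      simp [proj, Matrix.mulVec, dotProduct, Fin.sum_univ_two, Pi.star_apply,
        Complex.star_def, map_add, map_mul]
      ring
    rw [h]
    exact star_mul_self_nonneg _

lemma proj_add_perp (ψ : EuclideanSpace ℂ (Fin 2)) (hψ : ‖ψ‖ = 1) :
    proj ψ + proj (perp ψ) = 1 := by
  have h := unit_sum ψ hψ
  rw [← Matrix.ext_iff]
  simp only [Fin.forall_fin_two]
  refine ⟨⟨?_, ?_⟩, ?_, ?_⟩ <;> simp [proj, perp, Matrix.one_apply] <;>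
    first | linear_combination h | ring

lemma one_sub_proj (ψ : EuclideanSpace ℂ (Fin 2)) (hψ : ‖ψ‖ = 1) :
    (1 : Matrix (Fin 2) (Fin 2) ℂ) - proj ψ = proj (perp ψ) := by
  rw [← proj_add_perp ψ hψ]; abel

lemma norm_perp (ψ : EuclideanSpace ℂ (Fin 2)) (hψ : ‖ψ‖ = 1) : ‖perp ψ‖ = 1 := by
  rw [EuclideanSpace.norm_eq] at hψ ⊢
  simpa [perp, Fin.sum_univ_two, add_comm] using hψ

lemma inner_perp (ψ : EuclideanSpace ℂ (Fin 2)) : (inner ℂ (perp ψ) ψ : ℂ) = 0 := by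
  simp [perp, PiLp.inner_apply, RCLike.inner_apply, Fin.sum_univ_two]
  ring

lemma trace_proj (ψ : EuclideanSpace ℂ (Fin 2)) (hψ : ‖ψ‖ = 1) : (proj ψ).trace = 1 := by
  have h := unit_sum ψ hψ
  simp [proj, Matrix.trace, Matrix.diag, Fin.sum_univ_two]
  linear_combination h

def ev (a b : ℂ) : EuclideanSpace ℂ (Fin 2) := (WithLp.equiv 2 (Fin 2 → ℂ)).symm ![a, b]

@[simp] lemma ev_zero (a b : ℂ) : ev a b 0 = a := rfl
@[simp] lemma ev_one (a b : ℂ) : ev a b 1 = b := rfl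

lemma trace_mul_proj (M : Matrix (Fin 2) (Fin 2) ℂ) (x : EuclideanSpace ℂ (Fin 2)) :
    (M * proj x).trace = M 0 0 * (x 0 * (starRingEnd ℂ) (x 0))
      + M 0 1 * (x 1 * (starRingEnd ℂ) (x 0)) + M 1 0 * (x 0 * (starRingEnd ℂ) (x 1))
      + M 1 1 * (x 1 * (starRingEnd ℂ) (x 1)) := by
  simp [proj, Matrix.trace, Matrix.mul_apply, Matrix.diag, Fin.sum_univ_two]
  ring

lemma norm_ev (a b : ℂ) : ‖ev a b‖ = Real.sqrt (‖a‖^2 + ‖b‖^2) := by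
  rw [EuclideanSpace.norm_eq]
  simp [Fin.sum_univ_two]

lemma M_eq_half (M : Matrix (Fin 2) (Fin 2) ℂ)
    (h : ∀ x : EuclideanSpace ℂ (Fin 2), ‖x‖ = 1 →
      (M * proj x).trace = (((1/2 : ℂ) • 1 : Matrix (Fin 2) (Fin 2) ℂ) * proj x).trace) :
    M = (1/2 : ℂ) • 1 := by
  have hs2 : Real.sqrt 2 * Real.sqrt 2 = 2 := Real.mul_self_sqrt (by norm_num)
  set c : ℝ := (Real.sqrt 2)⁻¹ with hcdef
  have hcr : c * c = 1/2 := by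
    rw [hcdef, ← mul_inv, hs2]; norm_num
  have hc2 : (c : ℂ) * c = 1/2 := by
    have := congrArg (Complex.ofReal) hcr
    push_cast at this; exact this
  have hcnorm : ‖(c:ℂ)‖^2 = 1/2 := by
    rw [Complex.norm_real, Real.norm_eq_abs, abs_of_nonneg (by positivity : (0:ℝ) ≤ c), sq]
    exact hcr
  have n1 : ‖ev 1 0‖ = 1 := by rw [norm_ev]; simp
  have n2 : ‖ev 0 1‖ = 1 := by rw [norm_ev]; simp
  have n3 : ‖ev (c:ℂ) (c:ℂ)‖ = 1 := by
    rw [norm_ev, hcnorm]; norm_num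
  have n4 : ‖ev (c:ℂ) ((c:ℂ) * Complex.I)‖ = 1 := by
    rw [norm_ev]
    rw [norm_mul, Complex.norm_I, mul_one, hcnorm]; norm_num
  have h1 := h _ n1
  have h2 := h _ n2
  have h3 := h _ n3
  have h4 := h _ n4
  rw [trace_mul_proj, trace_mul_proj] at h1 h2 h3 h4
  simp only [ev_zero, ev_one, map_mul, map_one, map_zero, Complex.conj_ofReal,
    Complex.conj_I, Matrix.smul_apply, Matrix.one_apply_eq, Matrix.one_apply_ne, ne_eq,
    Matrix.one_apply] at h1 h2 h3 h4
  norm_num at h1 h2 h3 h4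
  rw [h1, h2] at h4
  have e4 : (M 0 1 - M 1 0) * ((c:ℂ)*(c:ℂ)) * Complex.I = 0 := by linear_combination h4
  rw [hc2] at e4
  have exy : M 0 1 - M 1 0 = 0 := by
    linear_combination (-2*Complex.I) * e4 + (M 0 1 - M 1 0) * Complex.I_mul_I
  rw [h1, h2, hc2] at h3
  have e3 : M 0 1 + M 1 0 = 0 := by linear_combination 2*h3
  rw [← Matrix.ext_iff]
  simp only [Fin.forall_fin_two]
  refine ⟨⟨?_, ?_⟩, ?_, ?_⟩ <;> simp [Matrix.smul_apply, Matrix.one_apply]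
  · rw [h1]; norm_num
  · linear_combination (1/2:ℂ)*e3 + (1/2:ℂ)*exy
  · linear_combination (1/2:ℂ)*e3 - (1/2:ℂ)*exy
  · rw [h2]; norm_num

/-! ### Measure helpers -/

lemma integrable_of_bounded {Λ : Type*} [MeasurableSpace Λ] {f : Λ → ℝ} (hm : Measurable f)
    (h0 : ∀ l, 0 ≤ f l) (h1 : ∀ l, f l ≤ 1) (μ : Measure Λ) [IsFiniteMeasure μ] :
    Integrable f μ := by
  refine Integrable.mono' (integrable_const 1) hm.aestronglyMeasurable ?_
  filter_upwards with l
  rw [Real.norm_eq_abs, abs_of_nonneg (h0 l)]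
  exact h1 l

lemma ae_eq_one_of_integral {Λ : Type*} [MeasurableSpace Λ] {f : Λ → ℝ} {μ : Measure Λ}
    [IsProbabilityMeasure μ] (hm : Measurable f) (h0 : ∀ l, 0 ≤ f l) (h1 : ∀ l, f l ≤ 1)
    (hint : ∫ l, f l ∂μ = 1) : f =ᵐ[μ] 1 := by
  have hfint : Integrable f μ := integrable_of_bounded hm h0 h1 μ
  have hgint : Integrable (fun l => 1 - f l) μ := (integrable_const 1).sub hfint
  have hzero : ∫ l, (1 - f l) ∂μ = 0 := by
    rw [integral_sub (integrable_const 1) hfint, hint]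
    simp
  have := (integral_eq_zero_iff_of_nonneg (fun l => by simp [h1 l]) hgint).mp hzero
  filter_upwards [this] with l hl
  simp only [Pi.zero_apply] at hl
  simp only [Pi.one_apply]
  linarith

lemma ae_eq_zero_of_integral {Λ : Type*} [MeasurableSpace Λ] {f : Λ → ℝ} {μ : Measure Λ}
    [IsFiniteMeasure μ] (hm : Measurable f) (h0 : ∀ l, 0 ≤ f l) (h1 : ∀ l, f l ≤ 1)
    (hint : ∫ l, f l ∂μ = 0) : f =ᵐ[μ] 0 :=
  (integral_eq_zero_iff_of_nonneg h0 (integrable_of_bounded hm h0 h1 μ)).mp hint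

/-- In an ontological model for `ℂ²` with `D` injective, for all unit vectors `ψ, φ`:
`ρ₁(Λ_ψ ∩ Λ_φ) = tr(P_ψ P_φ) = |⟨ψ, φ⟩|²`, where `ρ₁ = 2 · D⁻¹(½ I)` and
`Λ_χ = {λ : p_{P_χ}(λ) = 1}`. -/
theorem rho1_inter_eq_trace {Λ : Type*} [MeasurableSpace Λ] (M : OntModel 2 Λ)
    (hinj : ∀ ρa ∈ M.C, ∀ ρb ∈ M.C, M.D ρa = M.D ρb → ρa = ρb)
    (ψ φ : EuclideanSpace ℂ (Fin 2)) (hψ : ‖ψ‖ = 1) (hφ : ‖φ‖ = 1)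
    (ρhalf : Measure Λ) (hρhalf : ρhalf ∈ M.C)
    (hDhalf : M.D ρhalf = (1 / 2 : ℂ) • 1) :
    ((2 : ℝ≥0) • ρhalf) ({l | M.p (proj ψ) l = 1} ∩ {l | M.p (proj φ) l = 1})
        = ENNReal.ofReal (‖(inner ℂ ψ φ : ℂ)‖ ^ 2)
    ∧ (proj ψ * proj φ).trace = ((‖(inner ℂ ψ φ : ℂ)‖ ^ 2 : ℝ) : ℂ) := by
  refine ⟨?_, trace_proj_mul' ψ φ⟩
  -- effects are effects
  have heff : ∀ x : EuclideanSpace ℂ (Fin 2), ‖x‖ = 1 →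
      (proj x).PosSemidef ∧ ((1 : Matrix (Fin 2) (Fin 2) ℂ) - proj x).PosSemidef := by
    intro x hx
    refine ⟨posSemidef_proj x, ?_⟩
    rw [one_sub_proj x hx]
    exact posSemidef_proj (perp x)
  -- the basic statistics identity
  have hstat : ∀ ρ ∈ M.C, ∀ y x : EuclideanSpace ℂ (Fin 2), ‖x‖ = 1 → M.D ρ = proj y →
      ∫ l, M.p (proj x) l ∂ρ = ‖(inner ℂ y x : ℂ)‖ ^ 2 := by
    intro ρ hρ y x hx hD
    have := M.agree ρ hρ (proj x) (heff x hx).1 (heff x hx).2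
    rw [hD, trace_proj_mul'] at this
    exact_mod_cast this
  -- key decomposition : 2 • ρhalf = ρ_χ + ρ_{χ⊥} for every unit χ
  have key : ∀ χ : EuclideanSpace ℂ (Fin 2), ‖χ‖ = 1 →
      ∃ ρa, ρa ∈ M.C ∧ ∃ ρb, ρb ∈ M.C ∧ M.D ρa = proj χ ∧ M.D ρb = proj (perp χ) ∧
        (2 : ℝ≥0) • ρhalf = ρa + ρb := by
    intro χ hχ
    obtain ⟨ρa, hρa, hDa⟩ := M.D_surj (proj χ) (posSemidef_proj χ) (trace_proj χ hχ)
    obtain ⟨ρb, hρb, hDb⟩ :=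
      M.D_surj (proj (perp χ)) (posSemidef_proj (perp χ)) (trace_proj (perp χ) (norm_perp χ hχ))
    have h12 : (1 : ℝ≥0) - 1/2 = 1/2 := by
      rw [← NNReal.coe_inj, NNReal.coe_sub (by norm_num)]
      norm_num
    have hσC := M.convexC ρa hρa ρb hρb (1/2) (by norm_num)
    rw [h12] at hσC
    set σ : Measure Λ := (1/2 : ℝ≥0) • ρa + (1/2 : ℝ≥0) • ρb with hσdef
    haveI := M.prob ρa hρa
    haveI := M.prob ρb hρb
    -- D σ = (1/2) • 1
    have hDσ : M.D σ = (1/2 : ℂ) • 1 := by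
      apply M_eq_half
      intro x hx
      have hs := M.agree σ hσC (proj x) (heff x hx).1 (heff x hx).2
      have hsa := M.agree ρa hρa (proj x) (heff x hx).1 (heff x hx).2
      have hsb := M.agree ρb hρb (proj x) (heff x hx).1 (heff x hx).2
      have hintσ : ∫ l, M.p (proj x) l ∂σ
          = (1/2 : ℝ) * ∫ l, M.p (proj x) l ∂ρa + (1/2 : ℝ) * ∫ l, M.p (proj x) l ∂ρb := by
        rw [hσdef]
        rw [integral_add_measure]
        · rw [integral_smul_nnreal_measure, integral_smul_nnreal_measure,
            NNReal.smul_def, NNReal.smul_def]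
          norm_num
        · exact (integrable_of_bounded (M.p_meas _) (M.p_nonneg _) (M.p_le_one _) ρa).smul_measure
            (by simp : ((1/2 : ℝ≥0) : ℝ≥0∞) ≠ ⊤)
        · exact (integrable_of_bounded (M.p_meas _) (M.p_nonneg _) (M.p_le_one _) ρb).smul_measure
            (by simp : ((1/2 : ℝ≥0) : ℝ≥0∞) ≠ ⊤)
      rw [← hs, hintσ]
      push_cast
      rw [hsa, hsb, hDa, hDb]
      have hsum : proj χ * proj x + proj (perp χ) * proj x = proj x := by
        rw [← Matrix.add_mul, proj_add_perp χ hχ, one_mul]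
      calc (1/2 : ℂ) * (proj χ * proj x).trace + (1/2 : ℂ) * (proj (perp χ) * proj x).trace
          = (1/2 : ℂ) * (proj χ * proj x + proj (perp χ) * proj x).trace := by
            rw [Matrix.trace_add]; ring
        _ = (1/2 : ℂ) * (proj x).trace := by rw [hsum]
        _ = (((1/2 : ℂ) • 1 : Matrix (Fin 2) (Fin 2) ℂ) * proj x).trace := by
            rw [Matrix.smul_mul, one_mul, Matrix.trace_smul, smul_eq_mul]
    have hσhalf : σ = ρhalf := hinj σ hσC ρhalf hρhalf (by rw [hDσ, hDhalf])
    refine ⟨ρa, hρa, ρb, hρb, hDa, hDb, ?_⟩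
    rw [← hσhalf, hσdef, smul_add, smul_smul, smul_smul]
    norm_num
  obtain ⟨ρ1, hρ1, ρ2, hρ2, hD1, hD2, hdecψ⟩ := key ψ hψ
  obtain ⟨ρ3, hρ3, ρ4, hρ4, hD3, hD4, hdecφ⟩ := key φ hφ
  haveI := M.prob ρ1 hρ1
  haveI := M.prob ρ2 hρ2
  haveI := M.prob ρ3 hρ3
  haveI := M.prob ρ4 hρ4
  set Sψ : Set Λ := {l | M.p (proj ψ) l = 1} with hSψdef
  set Sφ : Set Λ := {l | M.p (proj φ) l = 1} with hSφdef
  have hSψm : MeasurableSet Sψ := M.p_meas (proj ψ) (measurableSet_singleton 1)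
  have hSφm : MeasurableSet Sφ := M.p_meas (proj φ) (measurableSet_singleton 1)
  -- a.e. facts
  have hinner1 : ∀ χ : EuclideanSpace ℂ (Fin 2), ‖χ‖ = 1 → (inner ℂ χ χ : ℂ) = 1 := by
    intro χ hχ
    rw [inner_self_eq_norm_sq_to_K, hχ]
    norm_num
  have h1ψ : M.p (proj ψ) =ᵐ[ρ1] 1 := by
    refine ae_eq_one_of_integral (M.p_meas _) (M.p_nonneg _) (M.p_le_one _) ?_
    rw [hstat ρ1 hρ1 ψ ψ hψ hD1, hinner1 ψ hψ]
    norm_num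
  have h0ψ : M.p (proj ψ) =ᵐ[ρ2] 0 := by
    refine ae_eq_zero_of_integral (M.p_meas _) (M.p_nonneg _) (M.p_le_one _) ?_
    rw [hstat ρ2 hρ2 (perp ψ) ψ hψ hD2, inner_perp ψ]
    norm_num
  have h1φ : M.p (proj φ) =ᵐ[ρ3] 1 := by
    refine ae_eq_one_of_integral (M.p_meas _) (M.p_nonneg _) (M.p_le_one _) ?_
    rw [hstat ρ3 hρ3 φ φ hφ hD3, hinner1 φ hφ]
    norm_num
  have h0φ : M.p (proj φ) =ᵐ[ρ4] 0 := by
    refine ae_eq_zero_of_integral (M.p_meas _) (M.p_nonneg _) (M.p_le_one _) ?_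
    rw [hstat ρ4 hρ4 (perp φ) φ hφ hD4, inner_perp φ]
    norm_num
  -- null sets
  have hcψ : ρ1 Sψᶜ = 0 := by
    have := ae_iff.mp h1ψ
    simpa [hSψdef, Set.compl_setOf] using this
  have h2Sψ : ρ2 Sψ = 0 := by
    refine measure_mono_null ?_ (ae_iff.mp h0ψ)
    intro l hl
    simp only [Set.mem_setOf_eq, Pi.zero_apply] at *
    rw [hl]
    norm_num
  -- p (proj φ) is a.e. the indicator of Sφ w.r.t. ρ3 + ρ4, hence w.r.t. ρ1
  have hInd : M.p (proj φ) =ᵐ[ρ3 + ρ4] Sφ.indicator (fun _ => (1:ℝ)) := by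
    rw [Filter.EventuallyEq, ae_add_measure_iff]
    constructor
    · filter_upwards [h1φ] with l hl
      rw [Set.indicator_of_mem (show l ∈ Sφ from hl)]
      exact hl
    · filter_upwards [h0φ] with l hl
      rw [Set.indicator_of_notMem (show l ∉ Sφ by simp [hSφdef, hl])]
      exact hl
  have hle : ρ1 ≤ ρ3 + ρ4 := by
    rw [← hdecφ, hdecψ]
    exact Measure.le_add_right le_rfl
  have hIndψ : M.p (proj φ) =ᵐ[ρ1] Sφ.indicator (fun _ => (1:ℝ)) :=
    hInd.filter_mono (ae_mono hle)
  -- the value of ρ1 Sφ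
  have hval : (ρ1 Sφ).toReal = ‖(inner ℂ ψ φ : ℂ)‖ ^ 2 := by
    rw [← hstat ρ1 hρ1 ψ φ hφ hD1, integral_congr_ae hIndψ,
      integral_indicator_const (1:ℝ) hSφm]
    simp
    rfl
  -- put everything together
  rw [hdecψ, Measure.add_apply]
  have hz : ρ2 (Sψ ∩ Sφ) = 0 := measure_mono_null Set.inter_subset_left h2Sψ
  rw [hz, add_zero]
  have hinter : ρ1 (Sψ ∩ Sφ) = ρ1 Sφ := by
    refine le_antisymm (measure_mono Set.inter_subset_right) ?_
    calc ρ1 Sφ ≤ ρ1 ((Sψ ∩ Sφ) ∪ Sψᶜ) := by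
          refine measure_mono ?_
          intro l hl
          by_cases h : l ∈ Sψ
          · exact Or.inl ⟨h, hl⟩
          · exact Or.inr h
      _ ≤ ρ1 (Sψ ∩ Sφ) + ρ1 Sψᶜ := measure_union_le _ _
      _ = ρ1 (Sψ ∩ Sφ) := by rw [hcψ, add_zero]
  rw [hinter, ← hval, ENNReal.ofReal_toReal (measure_ne_top ρ1 Sφ)]
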